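/- For γ > 0, c > 0, d ≥ 1, the function p(x,t) = (Γ(γ + d/2)/(π^{d/2}Γ(γ))) (ct)^{-d} (1 - ‖x‖²/(ct)²)^{γ-1}, defined on the open region {(x,t) : t > 0, ‖x‖ < ct}, satisfies the Euler–Poisson–Darboux equation ∂²p/∂t² + ((d + 2γ - 1)/t) ∂p/∂t = c² Δp. -/

import Mathlib

open Real

lemma phi_hasDerivAt (c A e β s : ℝ) (hcs : 0 < c * s) (hA : A < (c*s)^2) :
    HasDerivAt (fun s => (c*s) ^ e * (1 - A/(c*s)^2) ^ β)
      (e * c * (c*s) ^ (e-1) * (1 - A/(c*s)^2) ^ β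
        + 2*A*c*β * (c*s) ^ (e-3) * (1 - A/(c*s)^2) ^ (β-1)) s := by
  have hne : (c*s) ≠ 0 := hcs.ne'
  have hu : 0 < 1 - A/(c*s)^2 := by
    rw [sub_pos, div_lt_one (by positivity)]; exact hA
  have h1 : HasDerivAt (fun s => c*s) c s := by
    simpa using (hasDerivAt_id s).const_mul c
  have h2 : HasDerivAt (fun s => (c*s)^e) (c * e * (c*s)^(e-1)) s :=
    h1.rpow_const (Or.inl hne)
  have h3 : HasDerivAt (fun s : ℝ => (c*s)^2) ((2:ℕ) * (c*s)^1 * c) s := h1.pow 2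
  have h5 : HasDerivAt (fun s => 1 - A/(c*s)^2)
      (0 - (0 * (c*s)^2 - A * ((2:ℕ) * (c*s)^1 * c)) / ((c*s)^2)^2) s :=
    (hasDerivAt_const s 1).sub (((hasDerivAt_const s A).div h3 (by positivity)))
  have h7 : HasDerivAt (fun s => (1 - A/(c*s)^2)^β)
      ((0 - (0 * (c*s)^2 - A * ((2:ℕ) * (c*s)^1 * c)) / ((c*s)^2)^2) * β *
        (1 - A/(c*s)^2)^(β-1)) s := h5.rpow_const (Or.inl hu.ne')
  have h8 : HasDerivAt (fun s => (c*s)^e * (1 - A/(c*s)^2)^β) _ s := h2.mul h7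
  have h9 : (c*s)^(e-3) = (c*s)^e / (c*s)^3 := by
    rw [Real.rpow_sub hcs, show ((3:ℝ)) = ((3:ℕ):ℝ) by norm_num, Real.rpow_natCast]
  have h10 : (c*s)^(e-1) = (c*s)^e / (c*s)^1 := by
    rw [Real.rpow_sub hcs, show ((1:ℝ)) = ((1:ℕ):ℝ) by norm_num, Real.rpow_natCast]
  convert h8 using 1
  rw [h9, h10]
  have hc0 : c ≠ 0 := left_ne_zero_of_mul hne; have hs0 : s ≠ 0 := right_ne_zero_of_mul hne
  field_simp
  ring

lemma phi_derivs (c A γ m t : ℝ) (hc : 0 < c) (ht : 0 < t) (hA : A < (c*t)^2) :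
    deriv (fun s => (c*s) ^ (-m) * (1 - A/(c*s)^2) ^ (γ-1)) t
      = -m * c * (c*t) ^ (-m-1) * (1 - A/(c*t)^2) ^ (γ-1)
        + 2*A*c*(γ-1) * (c*t) ^ (-m-3) * (1 - A/(c*t)^2) ^ (γ-2)
    ∧ iteratedDeriv 2 (fun s => (c*s) ^ (-m) * (1 - A/(c*s)^2) ^ (γ-1)) t
      = (-m*c) * ((-m-1) * c * (c*t) ^ (-m-2) * (1 - A/(c*t)^2) ^ (γ-1)
          + 2*A*c*(γ-1) * (c*t) ^ (-m-4) * (1 - A/(c*t)^2) ^ (γ-2))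
        + (2*A*c*(γ-1)) * ((-m-3) * c * (c*t) ^ (-m-4) * (1 - A/(c*t)^2) ^ (γ-2)
          + 2*A*c*(γ-2) * (c*t) ^ (-m-6) * (1 - A/(c*t)^2) ^ (γ-3)) := by
  set S : Set ℝ := {s | 0 < c*s ∧ A < (c*s)^2} with hSdef
  have hS : IsOpen S :=
    (isOpen_lt continuous_const (continuous_const.mul continuous_id)).inter
      (isOpen_lt continuous_const ((continuous_const.mul continuous_id).pow 2))
  have htS : t ∈ S := ⟨mul_pos hc ht, hA⟩
  have hmem : S ∈ nhds t := hS.mem_nhds htS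
  set F1 : ℝ → ℝ := fun s =>
      (-m*c) * ((c*s) ^ (-m-1) * (1 - A/(c*s)^2) ^ (γ-1))
        + (2*A*c*(γ-1)) * ((c*s) ^ (-m-3) * (1 - A/(c*s)^2) ^ (γ-1-1)) with hF1def
  have hF1 : ∀ s ∈ S, HasDerivAt (fun s => (c*s) ^ (-m) * (1 - A/(c*s)^2) ^ (γ-1)) (F1 s) s := by
    intro s hs
    have h := phi_hasDerivAt c A (-m) (γ-1) s hs.1 hs.2
    convert h using 1
    rw [hF1def]; ring
  have hev : deriv (fun s => (c*s) ^ (-m) * (1 - A/(c*s)^2) ^ (γ-1)) =ᶠ[nhds t] F1 := by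
    filter_upwards [hmem] with s hs
    exact (hF1 s hs).deriv
  constructor
  · rw [(hF1 t htS).deriv, hF1def]
    rw [show γ-1-1 = γ-2 by ring]
    ring
  · rw [iteratedDeriv_succ, iteratedDeriv_one, hev.deriv_eq]
    have hd1 := (phi_hasDerivAt c A (-m-1) (γ-1) t htS.1 htS.2).const_mul (-m*c)
    have hd2 := (phi_hasDerivAt c A (-m-3) (γ-1-1) t htS.1 htS.2).const_mul (2*A*c*(γ-1))
    have := (hd1.add hd2).deriv
    simp only [Pi.add_def] at this
    rw [hF1def] at *
    rw [this]
    rw [show -m-1-1 = -m-2 by ring, show -m-1-3 = -m-4 by ring,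
      show -m-3-1 = -m-4 by ring, show -m-3-3 = -m-6 by ring,
      show γ-1-1 = γ-2 by ring, show γ-2-1 = γ-3 by ring]

lemma psi_deriv2 (c t A b γ : ℝ) (hct : 0 < c*t) (hA : A < (c*t)^2) :
    iteratedDeriv 2 (fun s => (1 - (A + 2*b*s + s^2)/(c*t)^2) ^ (γ-1)) 0
      = -(2/(c*t)^2)*(γ-1) * (1 - A/(c*t)^2) ^ (γ-2)
        + (2*b/(c*t)^2)^2 * ((γ-1)*(γ-2)) * (1 - A/(c*t)^2) ^ (γ-3) := by
  have hct2 : (0:ℝ) < (c*t)^2 := by positivity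
  set S : Set ℝ := {s | A + 2*b*s + s^2 < (c*t)^2} with hSdef
  have hS : IsOpen S := isOpen_lt (by continuity) continuous_const
  have h0S : (0:ℝ) ∈ S := by simpa [hSdef] using hA
  have hmem : S ∈ nhds (0:ℝ) := hS.mem_nhds h0S
  have hq : ∀ s : ℝ, HasDerivAt (fun s => A + 2*b*s + s^2) (2*b + 2*s) s := by
    intro s
    have h : HasDerivAt (fun s => A + 2*b*s + s^2) _ s :=
      (((hasDerivAt_id s).const_mul (2*b)).const_add A).add (hasDerivAt_pow 2 s)
    convert h using 1
    push_cast; ring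
  have hWpos : ∀ s ∈ S, 0 < 1 - (A + 2*b*s + s^2)/(c*t)^2 := by
    intro s hs
    rw [sub_pos, div_lt_one hct2]; exact hs
  have hW : ∀ s : ℝ, HasDerivAt (fun s => 1 - (A + 2*b*s + s^2)/(c*t)^2)
      (-((2*b + 2*s)/(c*t)^2)) s := by
    intro s
    have := ((hq s).div_const ((c*t)^2)).const_sub 1
    convert this using 1
  set G1 : ℝ → ℝ := fun s => -((2*b + 2*s)/(c*t)^2) * (γ-1) *
      (1 - (A + 2*b*s + s^2)/(c*t)^2) ^ (γ-1-1) with hG1def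
  have hF : ∀ s ∈ S, HasDerivAt (fun s => (1 - (A + 2*b*s + s^2)/(c*t)^2) ^ (γ-1)) (G1 s) s := by
    intro s hs
    exact (hW s).rpow_const (Or.inl (hWpos s hs).ne')
  have hev : deriv (fun s => (1 - (A + 2*b*s + s^2)/(c*t)^2) ^ (γ-1)) =ᶠ[nhds (0:ℝ)] G1 := by
    filter_upwards [hmem] with s hs
    exact (hF s hs).deriv
  rw [iteratedDeriv_succ, iteratedDeriv_one, hev.deriv_eq]
  have hf1 : HasDerivAt (fun s : ℝ => -((2*b + 2*s)/(c*t)^2) * (γ-1))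
      (-(2/(c*t)^2) * (γ-1)) 0 := by
    have h2 : HasDerivAt (fun s : ℝ => 2*b + 2*s) 2 0 := by
      simpa using ((hasDerivAt_id (0:ℝ)).const_mul 2).const_add (2*b)
    have : HasDerivAt (fun s : ℝ => -((2*b + 2*s)/(c*t)^2) * (γ-1)) _ 0 :=
      (((h2.div_const ((c*t)^2)).neg).mul_const (γ-1))
    convert this using 1
  have hf2 : HasDerivAt (fun s : ℝ => (1 - (A + 2*b*s + s^2)/(c*t)^2) ^ (γ-1-1))
      (-((2*b + 2*0)/(c*t)^2) * (γ-1-1) *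
        (1 - (A + 2*b*0 + 0^2)/(c*t)^2) ^ (γ-1-1-1)) 0 :=
    (hW 0).rpow_const (Or.inl (hWpos 0 h0S).ne')
  have hprod : HasDerivAt (fun s : ℝ => -((2*b + 2*s)/(c*t)^2) * (γ-1) *
      (1 - (A + 2*b*s + s^2)/(c*t)^2) ^ (γ-1-1)) _ 0 := hf1.mul hf2
  rw [hG1def, hprod.deriv]
  rw [show A + 2*b*0 + (0:ℝ)^2 = A by ring, show γ-1-1 = γ-2 by ring,
    show γ-2-1 = γ-3 by ring]
  ring

lemma iteratedDeriv2_const_mul (K : ℝ) (g : ℝ → ℝ) (t : ℝ) :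
    iteratedDeriv 2 (fun s => K * g s) t = K * iteratedDeriv 2 g t := by
  rw [iteratedDeriv_succ, iteratedDeriv_one, iteratedDeriv_succ, iteratedDeriv_one]
  rw [deriv_const_mul_field' K]
  exact deriv_const_mul_field K

/-- Coordinatewise Laplacian of a function on `ℝ^d`. -/
noncomputable def laplacian {d : ℕ} (g : EuclideanSpace ℝ (Fin d) → ℝ)
    (x : EuclideanSpace ℝ (Fin d)) : ℝ :=
  ∑ i : Fin d, iteratedDeriv 2 (fun s : ℝ => g (x + s • EuclideanSpace.single i 1)) 0

/-- The fundamental solution of the Euler–Poisson–Darboux equation satisfies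
`∂²p/∂t² + ((d+2γ-1)/t) ∂p/∂t = c² Δp` on the region `{t > 0, ‖x‖ < ct}`. -/
theorem epd_fundamental_solution_solves_epd (d : ℕ) (hd : 1 ≤ d)
    (γ c : ℝ) (hγ : 0 < γ) (hc : 0 < c)
    (p : EuclideanSpace ℝ (Fin d) → ℝ → ℝ)
    (hp : ∀ x s, p x s =
      (Real.Gamma (γ + d / 2) / (Real.pi ^ ((d : ℝ) / 2) * Real.Gamma γ)) *
        (c * s) ^ (-(d : ℝ)) * (1 - ‖x‖ ^ 2 / (c * s) ^ 2) ^ (γ - 1))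
    (x : EuclideanSpace ℝ (Fin d)) (t : ℝ) (ht : 0 < t) (hx : ‖x‖ < c * t) :
    iteratedDeriv 2 (fun s => p x s) t +
      ((d + 2 * γ - 1) / t) * deriv (fun s => p x s) t =
    c ^ 2 * laplacian (fun y => p y t) x := by
  set K : ℝ := Real.Gamma (γ + d / 2) / (Real.pi ^ ((d : ℝ) / 2) * Real.Gamma γ) with hK
  have hz : (0:ℝ) < c*t := mul_pos hc ht
  have hA : ‖x‖^2 < (c*t)^2 := by
    have := pow_lt_pow_left₀ hx (norm_nonneg x) (by norm_num : 2 ≠ 0)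
    exact this
  have hu0 : 0 < 1 - ‖x‖^2/(c*t)^2 := by
    rw [sub_pos, div_lt_one (by positivity)]; exact hA
  -- time derivatives
  have hfun : (fun s => p x s)
      = fun s => K * ((c*s) ^ (-(d:ℝ)) * (1 - ‖x‖^2/(c*s)^2) ^ (γ-1)) := by
    funext s; rw [hp x s]; ring
  obtain ⟨hd1, hd2⟩ := phi_derivs c (‖x‖^2) γ (d:ℝ) t hc ht hA
  -- spatial derivatives
  have hnorm : ∀ (i : Fin d) (s : ℝ),
      ‖x + s • EuclideanSpace.single i (1:ℝ)‖^2 = ‖x‖^2 + 2*(x i)*s + s^2 := by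
    intro i s
    rw [norm_add_sq_real, real_inner_smul_right, EuclideanSpace.inner_single_right,
      norm_smul, EuclideanSpace.norm_single]
    simp [Real.norm_eq_abs, mul_pow, sq_abs]
    ring
  have hxsum : ∑ i : Fin d, (x i)^2 = ‖x‖^2 := by
    rw [EuclideanSpace.norm_eq, Real.sq_sqrt (by positivity)]
    simp [Real.norm_eq_abs, sq_abs]
  have hlap : laplacian (fun y => p y t) x
      = (d:ℝ) * ((K * (c*t) ^ (-(d:ℝ))) * (-(2/(c*t)^2)*(γ-1) * (1 - ‖x‖^2/(c*t)^2) ^ (γ-2)))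
        + (K * (c*t) ^ (-(d:ℝ))) * ((γ-1)*(γ-2)) * (4/((c*t)^2)^2)
          * (1 - ‖x‖^2/(c*t)^2) ^ (γ-3) * ‖x‖^2 := by
    unfold laplacian
    have hterm : ∀ i : Fin d,
        iteratedDeriv 2 (fun s : ℝ => (fun y => p y t) (x + s • EuclideanSpace.single i 1)) 0
        = (K * (c*t) ^ (-(d:ℝ))) * (-(2/(c*t)^2)*(γ-1) * (1 - ‖x‖^2/(c*t)^2) ^ (γ-2))
          + ((K * (c*t) ^ (-(d:ℝ))) * ((γ-1)*(γ-2)) * (4/((c*t)^2)^2)) * (x i)^2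
            * (1 - ‖x‖^2/(c*t)^2) ^ (γ-3) := by
      intro i
      have hfe : (fun s : ℝ => (fun y => p y t) (x + s • EuclideanSpace.single i 1))
          = fun s => (K * (c*t) ^ (-(d:ℝ))) *
              ((1 - (‖x‖^2 + 2*(x i)*s + s^2)/(c*t)^2) ^ (γ-1)) := by
        funext s
        simp only
        rw [hp, hnorm i s]
      rw [hfe, iteratedDeriv2_const_mul, psi_deriv2 c t (‖x‖^2) (x i) γ hz hA]
      ring
    rw [Finset.sum_congr rfl (fun i _ => hterm i)]
    rw [Finset.sum_add_distrib, Finset.sum_const, Finset.card_univ, Fintype.card_fin]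
    rw [← Finset.sum_mul, ← Finset.mul_sum, hxsum]
    push_cast
    ring
  rw [hfun, iteratedDeriv2_const_mul, deriv_const_mul_field, hd1, hd2, hlap]
  -- rpow reductions
  have e1 : (c*t)^(-(d:ℝ)-1) = (c*t)^(-(d:ℝ)) / (c*t)^1 := by
    rw [Real.rpow_sub hz, show ((1:ℝ)) = ((1:ℕ):ℝ) by norm_num, Real.rpow_natCast]
  have e2 : (c*t)^(-(d:ℝ)-2) = (c*t)^(-(d:ℝ)) / (c*t)^2 := by
    rw [Real.rpow_sub hz, show ((2:ℝ)) = ((2:ℕ):ℝ) by norm_num, Real.rpow_natCast]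
  have e3 : (c*t)^(-(d:ℝ)-3) = (c*t)^(-(d:ℝ)) / (c*t)^3 := by
    rw [Real.rpow_sub hz, show ((3:ℝ)) = ((3:ℕ):ℝ) by norm_num, Real.rpow_natCast]
  have e4 : (c*t)^(-(d:ℝ)-4) = (c*t)^(-(d:ℝ)) / (c*t)^4 := by
    rw [Real.rpow_sub hz, show ((4:ℝ)) = ((4:ℕ):ℝ) by norm_num, Real.rpow_natCast]
  have e6 : (c*t)^(-(d:ℝ)-6) = (c*t)^(-(d:ℝ)) / (c*t)^6 := by
    rw [Real.rpow_sub hz, show ((6:ℝ)) = ((6:ℕ):ℝ) by norm_num, Real.rpow_natCast]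
  have f1 : (1 - ‖x‖^2/(c*t)^2) ^ (γ-1)
      = (1 - ‖x‖^2/(c*t)^2) ^ (γ-3) * (1 - ‖x‖^2/(c*t)^2)^2 := by
    rw [show γ-1 = γ-3 + ((2:ℕ):ℝ) by push_cast; ring, Real.rpow_add hu0, Real.rpow_natCast]
  have f2 : (1 - ‖x‖^2/(c*t)^2) ^ (γ-2)
      = (1 - ‖x‖^2/(c*t)^2) ^ (γ-3) * (1 - ‖x‖^2/(c*t)^2) := by
    rw [show γ-2 = γ-3 + 1 by ring, Real.rpow_add hu0, Real.rpow_one]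
  rw [e1, e2, e3, e4, e6, f1, f2]
  have htne : t ≠ 0 := ht.ne'
  have hcne : c ≠ 0 := hc.ne'
  field_simp
  ring
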